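/- arXiv:0808.3959 — 2 statements merged into one kernel-verified Lean document; each statement's English description precedes it below -/
import Mathlib

section
/- Let G be a finite additive abelian group. Let v₁, v₂ : Ω → G be random variables, U₁, U₂ : Ω → G be independent uniform random variables with (U₁, U₂) independent of (v₁, v₂), and let f : G × G → G be any function (modeling the channel output estimate composed with channel randomness being deterministic). Define N = f(v₁ + U₁, v₂ + U₂) − (v₁ + U₁) − (v₂ + U₂). Then N is independent of (v₁, v₂). -/
open MeasureTheory ProbabilityTheory

theorem noise_indep_of_messages {Ω G : Type*} [MeasurableSpace Ω] [AddCommGroup G] [Fintype G]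
    [MeasurableSpace G] [DiscreteMeasurableSpace G]
    (μ : Measure Ω) [IsProbabilityMeasure μ]
    (v₁ v₂ U₁ U₂ : Ω → G)
    (hv₁ : Measurable v₁) (hv₂ : Measurable v₂)
    (hU₁ : Measurable U₁) (hU₂ : Measurable U₂)
    (hUindep : IndepFun U₁ U₂ μ)
    (hU₁unif : ∀ g : G, μ (U₁ ⁻¹' {g}) = (Fintype.card G : ENNReal)⁻¹)
    (hU₂unif : ∀ g : G, μ (U₂ ⁻¹' {g}) = (Fintype.card G : ENNReal)⁻¹)
    (hUv : IndepFun (fun ω => (U₁ ω, U₂ ω)) (fun ω => (v₁ ω, v₂ ω)) μ)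
    (f : G × G → G) :
    IndepFun
      (fun ω => f (v₁ ω + U₁ ω, v₂ ω + U₂ ω) - (v₁ ω + U₁ ω) - (v₂ ω + U₂ ω))
      (fun ω => (v₁ ω, v₂ ω)) μ := by
  set X : Ω → G × G := fun ω => (v₁ ω + U₁ ω, v₂ ω + U₂ ω) with hX
  set V : Ω → G × G := fun ω => (v₁ ω, v₂ ω) with hV
  have hXm : Measurable X := ((hv₁.add hU₁).prodMk (hv₂.add hU₂))
  have hVm : Measurable V := hv₁.prodMk hv₂
  have hUm : Measurable (fun ω => (U₁ ω, U₂ ω)) := hU₁.prodMk hU₂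
  -- key joint computation
  have key : ∀ a b : G × G,
      μ (X ⁻¹' {a} ∩ V ⁻¹' {b}) =
        ((Fintype.card G : ENNReal)⁻¹ * (Fintype.card G : ENNReal)⁻¹) * μ (V ⁻¹' {b}) := by
    intro a b
    have hset : X ⁻¹' {a} ∩ V ⁻¹' {b}
        = (fun ω => (U₁ ω, U₂ ω)) ⁻¹' {(a.1 - b.1, a.2 - b.2)} ∩ V ⁻¹' {b} := by
      ext ω
      simp only [Set.mem_inter_iff, Set.mem_preimage, Set.mem_singleton_iff, hX, hV,
        Prod.ext_iff]
      constructor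
      · rintro ⟨⟨h1, h2⟩, hb1, hb2⟩
        refine ⟨⟨?_, ?_⟩, hb1, hb2⟩ <;> simp [← h1, ← h2, hb1, hb2]
      · rintro ⟨⟨h1, h2⟩, hb1, hb2⟩
        refine ⟨⟨?_, ?_⟩, hb1, hb2⟩ <;> simp [h1, h2, hb1, hb2]
    have hU : μ ((fun ω => (U₁ ω, U₂ ω)) ⁻¹' {(a.1 - b.1, a.2 - b.2)})
        = (Fintype.card G : ENNReal)⁻¹ * (Fintype.card G : ENNReal)⁻¹ := by
      have : ((fun ω => (U₁ ω, U₂ ω)) ⁻¹' {(a.1 - b.1, a.2 - b.2)})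
          = U₁ ⁻¹' {a.1 - b.1} ∩ U₂ ⁻¹' {a.2 - b.2} := by
        ext ω; simp [Prod.ext_iff]
      rw [this, hUindep.measure_inter_preimage_eq_mul _ _ (measurableSet_singleton _)
        (measurableSet_singleton _), hU₁unif, hU₂unif]
    rw [hset, hUv.measure_inter_preimage_eq_mul _ _ (measurableSet_singleton _)
      (measurableSet_singleton _), hU]
  -- marginal of X
  have hXa : ∀ a : G × G, μ (X ⁻¹' {a})
      = (Fintype.card G : ENNReal)⁻¹ * (Fintype.card G : ENNReal)⁻¹ := by
    intro a
    have hcover : X ⁻¹' {a} = ⋃ b : G × G, (X ⁻¹' {a} ∩ V ⁻¹' {b}) := by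
      ext ω; simp
    have hdisj : Pairwise (Function.onFun Disjoint
        fun b : G × G => X ⁻¹' {a} ∩ V ⁻¹' {b}) := by
      intro b c hbc
      refine Set.disjoint_left.2 ?_
      rintro ω ⟨-, h1⟩ ⟨-, h2⟩
      exact hbc (h1.symm.trans h2 : _)
    have hmeas : ∀ b : G × G, MeasurableSet (X ⁻¹' {a} ∩ V ⁻¹' {b}) := fun b =>
      (hXm (measurableSet_singleton _)).inter (hVm (measurableSet_singleton _))
    have hsum : ∑ b : G × G, μ (V ⁻¹' {b}) = 1 := by
      have hcover' : (⋃ b : G × G, V ⁻¹' {b}) = Set.univ := by ext ω; simp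
      have hdisj' : Pairwise (Function.onFun Disjoint fun b : G × G => V ⁻¹' {b}) := by
        intro b c hbc
        refine Set.disjoint_left.2 ?_
        rintro ω h1 h2
        exact hbc ((Set.mem_singleton_iff.1 h1).symm.trans h2 : _)
      have := measure_iUnion (μ := μ) hdisj' (fun b => hVm (measurableSet_singleton _))
      rw [hcover', measure_univ] at this
      rw [← tsum_fintype (L := SummationFilter.unconditional _)]
      exact this.symm
    have hstep : μ (X ⁻¹' {a}) = ∑' b : G × G, μ (X ⁻¹' {a} ∩ V ⁻¹' {b}) := by
      conv_lhs => rw [hcover]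
      exact measure_iUnion hdisj hmeas
    calc μ (X ⁻¹' {a}) = ∑' b : G × G, μ (X ⁻¹' {a} ∩ V ⁻¹' {b}) := hstep
      _ = ∑ b : G × G, μ (X ⁻¹' {a} ∩ V ⁻¹' {b}) := tsum_fintype _
      _ = ∑ b : G × G, ((Fintype.card G : ENNReal)⁻¹ * (Fintype.card G : ENNReal)⁻¹)
            * μ (V ⁻¹' {b}) := by simp_rw [key]
      _ = ((Fintype.card G : ENNReal)⁻¹ * (Fintype.card G : ENNReal)⁻¹)
            * ∑ b : G × G, μ (V ⁻¹' {b}) := by rw [Finset.mul_sum]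
      _ = _ := by rw [hsum, mul_one]
  have hXV : IndepFun X V μ := by
    rw [indepFun_iff_map_prod_eq_prod_map_map hXm.aemeasurable hVm.aemeasurable]
    refine MeasureTheory.Measure.ext_iff_singleton.2 fun p => ?_
    obtain ⟨a, b⟩ := p
    rw [Measure.map_apply (hXm.prodMk hVm) (measurableSet_singleton _)]
    have hpre : (fun ω => (X ω, V ω)) ⁻¹' {(a, b)} = X ⁻¹' {a} ∩ V ⁻¹' {b} := by
      ext ω; simp only [Set.mem_preimage, Set.mem_singleton_iff, Prod.ext_iff,
        Set.mem_inter_iff]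
    have hps : ({(a, b)} : Set ((G × G) × (G × G))) = {a} ×ˢ {b} := by
      ext q; simp [Prod.ext_iff]
    rw [hpre, hps, Measure.prod_prod,
      Measure.map_apply hXm (measurableSet_singleton _),
      Measure.map_apply hVm (measurableSet_singleton _), key, hXa]
  exact hXV.comp (measurable_of_countable (fun p : G × G => f p - p.1 - p.2)) measurable_id
end

section
/- Let G be a finite additive abelian group, X : Ω → G a random variable independent of V : Ω → G with X uniform on G, and W : Ω → G any random variable independent of (V, X) (modeling channel noise). Then for any function g : G → G, the random variable N = g(X + W) − X is independent of V. -/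
open MeasureTheory ProbabilityTheory

theorem noise_indep_with_channel_randomness {Ω G : Type*} [MeasurableSpace Ω]
    [AddCommGroup G] [Fintype G] [MeasurableSpace G] [DiscreteMeasurableSpace G]
    (μ : Measure Ω) [IsProbabilityMeasure μ]
    (V X W : Ω → G)
    (hV : Measurable V) (hX : Measurable X) (hW : Measurable W)
    (hXunif : ∀ g : G, μ (X ⁻¹' {g}) = (Fintype.card G : ENNReal)⁻¹)
    (hXV : IndepFun X V μ)
    (hWVX : IndepFun W (fun ω => (V ω, X ω)) μ)
    (g : G → G) :
    IndepFun (fun ω => g (X ω + W ω) - X ω) V μ := by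
  classical
  have hXWmeas : Measurable (fun ω => (X ω, W ω)) := hX.prodMk hW
  -- X independent of W (from W ⊥ (V, X), compose with snd)
  have hXW : IndepFun X W μ :=
    (hWVX.comp measurable_id measurable_snd).symm
  -- key: the pair (X, W) is independent of V
  have hpair : IndepFun (fun ω => (X ω, W ω)) V μ := by
    rw [indepFun_iff_map_prod_eq_prod_map_map (hXWmeas.aemeasurable) hV.aemeasurable]
    rw [Measure.ext_iff_singleton]
    rintro ⟨⟨x, w⟩, v⟩
    have hs1 : MeasurableSet ({((x, w), v)} : Set ((G × G) × G)) := measurableSet_singleton _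
    have hmap : Measurable (fun ω => ((X ω, W ω), V ω)) := hXWmeas.prodMk hV
    rw [Measure.map_apply hmap hs1]
    have hset : (fun ω => ((X ω, W ω), V ω)) ⁻¹' {((x, w), v)}
        = (W ⁻¹' {w}) ∩ ((fun ω => (V ω, X ω)) ⁻¹' {(v, x)}) := by
      ext ω
      simp only [Set.mem_preimage, Set.mem_singleton_iff, Set.mem_inter_iff, Prod.mk.injEq]
      tauto
    rw [hset, hWVX.measure_inter_preimage_eq_mul _ _ (measurableSet_singleton _)
      (measurableSet_singleton _)]
    have hset2 : ((fun ω => (V ω, X ω)) ⁻¹' {(v, x)}) = X ⁻¹' {x} ∩ V ⁻¹' {v} := by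
      ext ω
      simp only [Set.mem_preimage, Set.mem_singleton_iff, Set.mem_inter_iff, Prod.mk.injEq]
      tauto
    rw [hset2, hXV.measure_inter_preimage_eq_mul _ _ (measurableSet_singleton _)
      (measurableSet_singleton _)]
    have hsing : ({((x, w), v)} : Set ((G × G) × G)) = ({(x, w)} : Set (G × G)) ×ˢ ({v} : Set G) := by
      simp
    rw [hsing, Measure.prod_prod, Measure.map_apply hXWmeas (measurableSet_singleton _),
      Measure.map_apply hV (measurableSet_singleton _)]
    have hset3 : ((fun ω => (X ω, W ω)) ⁻¹' {(x, w)}) = X ⁻¹' {x} ∩ W ⁻¹' {w} := by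
      ext ω
      simp only [Set.mem_preimage, Set.mem_singleton_iff, Set.mem_inter_iff, Prod.mk.injEq]
    rw [hset3, hXW.measure_inter_preimage_eq_mul _ _ (measurableSet_singleton _)
      (measurableSet_singleton _)]
    ring
  -- conclude by composing with φ (p) = g (p.1 + p.2) - p.1
  have : IndepFun ((fun p : G × G => g (p.1 + p.2) - p.1) ∘ (fun ω => (X ω, W ω)))
      (id ∘ V) μ :=
    hpair.comp (measurable_of_countable _) measurable_id
  exact this
end
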